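/- For the empirical measure P_n^X of n i.i.d. samples from a Borel probability measure P on a separable metric space X, for every ε > 0 and η > 0 there exists N_η ∈ ℕ (depending only on a compact K with P(X∖K) ≤ ε) such that E_P[d_BL(P_n^X, P)] ≤ N_η/√n + 2η + 2ε. -/

import Mathlib

open MeasureTheory Filter Topology

/-- The bounded Lipschitz distance between two measures. -/
noncomputable def BLdist {α : Type*} [MeasurableSpace α] [PseudoMetricSpace α]
    (μ ν : Measure α) : ℝ :=
  sSup {r | ∃ f : α → ℝ, (∀ a, |f a| ≤ 1) ∧ LipschitzWith 1 f ∧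
    r = |(∫ a, f a ∂μ) - ∫ a, f a ∂ν|}

/-- The empirical measure of `x ∈ X^n`. -/
noncomputable def empMeasure {X : Type*} [MeasurableSpace X] (n : ℕ) (x : Fin n → X) :
    Measure X :=
  (n : ENNReal)⁻¹ • ∑ i : Fin n, Measure.dirac (x i)

set_option linter.unusedSectionVars false
set_option maxHeartbeats 1000000

section Aux
lemma integral_eval {X : Type*} [MeasurableSpace X] (P : Measure X) [IsProbabilityMeasure P]
    {n : ℕ} (g : X → ℝ) (i : Fin n) :
    ∫ x, g (x i) ∂(Measure.pi fun _ : Fin n => P) = ∫ a, g a ∂P := by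
  letI : MeasureSpace X := { volume := P }
  haveI : IsProbabilityMeasure (volume : Measure X) := ‹IsProbabilityMeasure P›
  have h1 : ∫ x, g (x i) ∂(Measure.pi fun _ : Fin n => P)
      = ∫ x : Fin n → X, ∏ k, (fun k (a : X) => if k = i then g a else 1) k (x k) := by
    rw [show (Measure.pi fun _ : Fin n => P) = (volume : Measure (Fin n → X)) from rfl]
    congr 1
    funext x
    simp only []
    rw [show (∏ k, (fun k (a : X) => if k = i then g a else 1) k (x k))
        = ∏ k, (if k = i then g (x k) else 1) from by
      refine Finset.prod_congr rfl fun k _ => ?_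
      by_cases h : k = i <;> simp [h]]
    simp [Finset.prod_ite_eq']
  rw [h1]
  rw [MeasureTheory.integral_fintype_prod_volume_eq_prod (fun k (a : X) => if k = i then g a else 1)]
  have : ∀ k : Fin n, (∫ a : X, (fun k (a : X) => if k = i then g a else 1) k a)
      = if k = i then ∫ a, g a ∂P else 1 := by
    intro k
    by_cases h : k = i <;> simp [h, volume] <;> rfl
  simp_rw [this]
  simp [Finset.prod_ite_eq']

lemma prod_two_aux {n : ℕ} {i j : Fin n} (hij : i ≠ j) (a b : ℝ) :
    (∏ k : Fin n, if k = i then a else if k = j then b else 1) = a * b := by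
  classical
  rw [← Finset.mul_prod_erase Finset.univ _ (Finset.mem_univ i),
    ← Finset.mul_prod_erase (Finset.univ.erase i) _
      (Finset.mem_erase.mpr ⟨hij.symm, Finset.mem_univ j⟩)]
  rw [if_pos rfl, if_neg hij.symm, if_pos rfl]
  have hone : (∏ k ∈ (Finset.univ.erase i).erase j,
      if k = i then a else if k = j then b else 1) = 1 := by
    refine Finset.prod_eq_one fun k hk => ?_
    simp only [Finset.mem_erase] at hk
    rw [if_neg hk.2.1, if_neg hk.1]
  rw [hone, mul_one]

lemma integral_eval_mul {X : Type*} [MeasurableSpace X] (P : Measure X) [IsProbabilityMeasure P]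
    {n : ℕ} (g h : X → ℝ) {i j : Fin n} (hij : i ≠ j) :
    ∫ x, g (x i) * h (x j) ∂(Measure.pi fun _ : Fin n => P)
      = (∫ a, g a ∂P) * ∫ a, h a ∂P := by
  letI : MeasureSpace X := { volume := P }
  haveI : IsProbabilityMeasure (volume : Measure X) := ‹IsProbabilityMeasure P›
  classical
  set f : Fin n → X → ℝ := fun k a => if k = i then g a else if k = j then h a else 1 with hf
  have h1 : ∫ x, g (x i) * h (x j) ∂(Measure.pi fun _ : Fin n => P)
      = ∫ x : Fin n → X, ∏ k, f k (x k) := by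
    rw [show (Measure.pi fun _ : Fin n => P) = (volume : Measure (Fin n → X)) from rfl]
    congr 1
    funext x
    have hkk : ∀ k : Fin n, f k (x k) = if k = i then g (x i) else if k = j then h (x j) else 1 := by
      intro k
      by_cases hki : k = i <;> by_cases hkj : k = j <;> simp [hf, hki, hkj, hij.symm]
    simp_rw [hkk]
    rw [prod_two_aux hij]
  rw [h1, MeasureTheory.integral_fintype_prod_volume_eq_prod f]
  have hkk : ∀ k : Fin n, (∫ a : X, f k a)
      = if k = i then (∫ a, g a ∂P) else if k = j then (∫ a, h a ∂P) else 1 := by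
    intro k
    by_cases hki : k = i <;> by_cases hkj : k = j <;> simp [hf, hki, hkj, hij.symm, volume] <;> rfl
  simp_rw [hkk]
  rw [prod_two_aux hij]

lemma empMeasure_isProb {X : Type*} [MeasurableSpace X] {n : ℕ} (hn : 1 ≤ n) (x : Fin n → X) :
    IsProbabilityMeasure (empMeasure n x) := by
  constructor
  simp only [empMeasure, Measure.smul_apply, Measure.coe_finset_sum, Finset.sum_apply,
    Measure.dirac_apply' _ MeasurableSet.univ, Set.indicator_univ, Pi.one_apply,
    Finset.sum_const, Finset.card_univ, Fintype.card_fin, nsmul_eq_mul, mul_one, smul_eq_mul]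
  have hn0 : (n : ENNReal) ≠ 0 := by
    simpa using Nat.one_le_iff_ne_zero.mp hn
  exact ENNReal.inv_mul_cancel hn0 (by simp)

lemma empMeasure_apply {X : Type*} [MeasurableSpace X] {n : ℕ} (x : Fin n → X) {s : Set X}
    (hs : MeasurableSet s) :
    (empMeasure n x s).toReal = (n : ℝ)⁻¹ * ∑ k : Fin n, s.indicator (fun _ => (1 : ℝ)) (x k) := by
  simp only [empMeasure, Measure.smul_apply, Measure.coe_finset_sum, Finset.sum_apply,
    Measure.dirac_apply' _ hs, smul_eq_mul]
  rw [ENNReal.toReal_mul, ENNReal.toReal_sum (fun k _ => by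
    by_cases h : x k ∈ s <;> simp [Set.indicator, h])]
  congr 1
  · simp
  · refine Finset.sum_congr rfl fun k _ => ?_
    by_cases h : x k ∈ s <;> simp [Set.indicator, h]

lemma key_approx {X : Type*} [MetricSpace X] [MeasurableSpace X] [BorelSpace X]
    (Q : Measure X) [IsProbabilityMeasure Q]
    (u : ℕ → X) {η : ℝ} (hη : 0 < η) (m : ℕ)
    (A : ℕ → Set X) (hAmeas : ∀ i, MeasurableSet (A i))
    (hAdisj : Pairwise (Function.onFun Disjoint A))
    (hAsub : ∀ i, A i ⊆ Metric.ball (u i) (η / 2))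
    {f : X → ℝ} (hfb : ∀ a, |f a| ≤ 1) (hfl : LipschitzWith 1 f) :
    |(∫ a, f a ∂Q) - ∑ i ∈ Finset.range m, f (u i) * (Q (A i)).toReal|
      ≤ η / 2 + (Q ((⋃ i ∈ Finset.range m, A i)ᶜ)).toReal := by
  classical
  set S : Set X := ⋃ i ∈ Finset.range m, A i with hS
  have hSmeas : MeasurableSet S := Finset.measurableSet_biUnion _ fun i _ => hAmeas i
  have hfint : Integrable f Q := by
    refine Integrable.mono' (integrable_const 1) hfl.continuous.measurable.aestronglyMeasurable ?_
    exact Eventually.of_forall fun a => by simpa [Real.norm_eq_abs] using hfb a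
  have hdecomp : ∫ a, f a ∂Q
      = (∑ i ∈ Finset.range m, ∫ a in A i, f a ∂Q) + ∫ a in Sᶜ, f a ∂Q := by
    rw [← integral_add_compl hSmeas hfint, hS,
      integral_biUnion_finset _ (fun i _ => hAmeas i) (hAdisj.set_pairwise _)
        (fun i _ => hfint.integrableOn)]
  have hpiece : ∀ i, |(∫ a in A i, f a ∂Q) - f (u i) * (Q (A i)).toReal|
      ≤ (η / 2) * (Q (A i)).toReal := by
    intro i
    have hconst : (∫ _ in A i, f (u i) ∂Q) = (Q (A i)).toReal * f (u i) := by
      rw [setIntegral_const, smul_eq_mul, measureReal_def]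
    have hsub : (∫ a in A i, f a ∂Q) - f (u i) * (Q (A i)).toReal
        = ∫ a in A i, (f a - f (u i)) ∂Q := by
      rw [integral_sub hfint.integrableOn integrableOn_const,
        hconst, mul_comm]
    rw [hsub]
    have := norm_setIntegral_le_of_norm_le_const (μ := Q) (s := A i)
      (measure_lt_top _ _) (C := η / 2) (f := fun a => f a - f (u i)) ?_
    · simpa [Real.norm_eq_abs, measureReal_def] using this
    · intro a ha
      have hd : dist (f a) (f (u i)) ≤ 1 * dist a (u i) := hfl.dist_le_mul a (u i)
      have hball : dist a (u i) < η / 2 := by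
        have := hAsub i ha; simpa [Metric.mem_ball] using this
      rw [Real.norm_eq_abs, ← Real.dist_eq]
      nlinarith [dist_nonneg (x := a) (y := u i)]
  have hout : |∫ a in Sᶜ, f a ∂Q| ≤ (Q Sᶜ).toReal := by
    have := norm_setIntegral_le_of_norm_le_const (μ := Q) (s := Sᶜ)
      (measure_lt_top _ _) (C := 1) (f := f)
      (fun a _ => by simpa [Real.norm_eq_abs] using hfb a)
    simpa [Real.norm_eq_abs, measureReal_def] using this
  have hsum_le_one : ∑ i ∈ Finset.range m, (Q (A i)).toReal ≤ 1 := by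
    have h1 : ∑ i ∈ Finset.range m, (Q (A i)).toReal = (Q S).toReal := by
      rw [hS, measure_biUnion_finset (hAdisj.set_pairwise _) (fun i _ => hAmeas i),
        ENNReal.toReal_sum (fun i _ => measure_ne_top _ _)]
    rw [h1]
    exact ENNReal.toReal_le_of_le_ofReal one_pos.le (by simpa using prob_le_one)
  calc |(∫ a, f a ∂Q) - ∑ i ∈ Finset.range m, f (u i) * (Q (A i)).toReal|
      = |(∑ i ∈ Finset.range m, ((∫ a in A i, f a ∂Q) - f (u i) * (Q (A i)).toReal))
          + ∫ a in Sᶜ, f a ∂Q| := by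
        rw [hdecomp]; congr 1; rw [Finset.sum_sub_distrib]; ring
    _ ≤ ∑ i ∈ Finset.range m, |(∫ a in A i, f a ∂Q) - f (u i) * (Q (A i)).toReal|
          + |∫ a in Sᶜ, f a ∂Q| := by
        refine (abs_add_le _ _).trans (by gcongr; exact Finset.abs_sum_le_sum_abs _ _)
    _ ≤ (η / 2) * ∑ i ∈ Finset.range m, (Q (A i)).toReal + (Q Sᶜ).toReal := by
        rw [Finset.mul_sum]
        exact add_le_add (Finset.sum_le_sum fun i _ => hpiece i) hout
    _ ≤ η / 2 + (Q Sᶜ).toReal := by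
        have hη2 : 0 ≤ η / 2 := by linarith
        nlinarith [ENNReal.toReal_nonneg (a := Q Sᶜ), hsum_le_one,
          Finset.sum_nonneg (fun i (_ : i ∈ Finset.range m) => ENNReal.toReal_nonneg (a := Q (A i)))]

lemma BLdist_bound {X : Type*} [MetricSpace X] [MeasurableSpace X] [BorelSpace X]
    (Q P : Measure X) [IsProbabilityMeasure Q] [IsProbabilityMeasure P]
    (u : ℕ → X) {η : ℝ} (hη : 0 < η) (m : ℕ)
    (A : ℕ → Set X) (hAmeas : ∀ i, MeasurableSet (A i))
    (hAdisj : Pairwise (Function.onFun Disjoint A))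
    (hAsub : ∀ i, A i ⊆ Metric.ball (u i) (η / 2)) :
    BLdist Q P ≤ η + (Q ((⋃ i ∈ Finset.range m, A i)ᶜ)).toReal
        + (P ((⋃ i ∈ Finset.range m, A i)ᶜ)).toReal
        + ∑ i ∈ Finset.range m, |(Q (A i)).toReal - (P (A i)).toReal|
      ∧ 0 ≤ BLdist Q P := by
  set S : Set X := ⋃ i ∈ Finset.range m, A i with hS
  set RHS : ℝ := η + (Q Sᶜ).toReal + (P Sᶜ).toReal
    + ∑ i ∈ Finset.range m, |(Q (A i)).toReal - (P (A i)).toReal| with hRHS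
  have hbound : ∀ r ∈ {r | ∃ f : X → ℝ, (∀ a, |f a| ≤ 1) ∧ LipschitzWith 1 f ∧
      r = |(∫ a, f a ∂Q) - ∫ a, f a ∂P|}, r ≤ RHS := by
    rintro r ⟨f, hfb, hfl, rfl⟩
    have h1 := key_approx Q u hη m A hAmeas hAdisj hAsub hfb hfl
    have h2 := key_approx P u hη m A hAmeas hAdisj hAsub hfb hfl
    have hmid : |∑ i ∈ Finset.range m, f (u i) * (Q (A i)).toReal
        - ∑ i ∈ Finset.range m, f (u i) * (P (A i)).toReal|
        ≤ ∑ i ∈ Finset.range m, |(Q (A i)).toReal - (P (A i)).toReal| := by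
      rw [← Finset.sum_sub_distrib]
      refine (Finset.abs_sum_le_sum_abs _ _).trans (Finset.sum_le_sum fun i _ => ?_)
      rw [← mul_sub, abs_mul]
      exact mul_le_of_le_one_left (abs_nonneg _) (hfb (u i)) |>.trans_eq rfl
    have h2' : |∑ i ∈ Finset.range m, f (u i) * (P (A i)).toReal - ∫ a, f a ∂P|
        ≤ η / 2 + (P Sᶜ).toReal := by rw [abs_sub_comm]; exact h2
    have t1 := abs_sub_le (∫ a, f a ∂Q)
      (∑ i ∈ Finset.range m, f (u i) * (Q (A i)).toReal) (∫ a, f a ∂P)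
    have t2 := abs_sub_le (∑ i ∈ Finset.range m, f (u i) * (Q (A i)).toReal)
      (∑ i ∈ Finset.range m, f (u i) * (P (A i)).toReal) (∫ a, f a ∂P)
    rw [hRHS]
    linarith
  have hRHSnn : 0 ≤ RHS :=
    hbound 0 ⟨fun _ => 0, by simp, (LipschitzWith.const 0).weaken zero_le_one, by simp⟩
  constructor
  · exact Real.sSup_le hbound hRHSnn
  · refine le_csSup ⟨RHS, hbound⟩ ?_
    exact ⟨fun _ => 0, by simp, (LipschitzWith.const 0).weaken zero_le_one, by simp⟩

variable {X : Type*} [MeasurableSpace X] (P : Measure X) [IsProbabilityMeasure P]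

lemma comp_eval_integrable {n : ℕ} {g : X → ℝ} (hg : Measurable g) {C : ℝ}
    (hgb : ∀ a, |g a| ≤ C) (k : Fin n) :
    Integrable (fun x : Fin n → X => g (x k)) (Measure.pi fun _ : Fin n => P) := by
  refine Integrable.mono' (integrable_const C) ?_ ?_
  · exact (hg.comp (measurable_pi_apply k)).aestronglyMeasurable
  · exact Eventually.of_forall fun x => by simpa [Real.norm_eq_abs] using hgb (x k)

lemma indicator_abs_le (s : Set X) (a : X) : |s.indicator (fun _ => (1:ℝ)) a| ≤ 1 := by
  by_cases h : a ∈ s <;> simp [Set.indicator, h]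

lemma freq_integrable {n : ℕ} {s : Set X} (hs : MeasurableSet s) :
    Integrable (fun x : Fin n → X => (n:ℝ)⁻¹ * ∑ k, s.indicator (fun _ => (1:ℝ)) (x k))
      (Measure.pi fun _ : Fin n => P) := by
  refine Integrable.const_mul (integrable_finset_sum _ fun k _ => ?_) _
  exact comp_eval_integrable P (measurable_const.indicator hs) (indicator_abs_le s) k

lemma freq_integral {n : ℕ} (hn : 1 ≤ n) {s : Set X} (hs : MeasurableSet s) :
    ∫ x, (n:ℝ)⁻¹ * ∑ k, s.indicator (fun _ => (1:ℝ)) (x k) ∂(Measure.pi fun _ : Fin n => P)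
      = (P s).toReal := by
  rw [integral_const_mul, integral_finset_sum _ fun k _ =>
    comp_eval_integrable P (measurable_const.indicator hs) (indicator_abs_le s) k]
  have : ∀ k : Fin n, ∫ x : Fin n → X, s.indicator (fun _ => (1:ℝ)) (x k)
      ∂(Measure.pi fun _ : Fin n => P) = (P s).toReal := fun k => by
    rw [integral_eval P _ k]
    simpa [measureReal_def, Pi.one_def] using MeasureTheory.integral_indicator_one (μ := P) hs
  simp_rw [this, Finset.sum_const, Finset.card_univ, Fintype.card_fin, nsmul_eq_mul]
  have hn' : (n : ℝ) ≠ 0 := Nat.cast_ne_zero.mpr (Nat.one_le_iff_ne_zero.mp hn)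
  field_simp

lemma freq_dev_le {n : ℕ} (hn : 1 ≤ n) {s : Set X} (hs : MeasurableSet s) :
    ∫ x, |(n:ℝ)⁻¹ * (∑ k, s.indicator (fun _ => (1:ℝ)) (x k)) - (P s).toReal|
        ∂(Measure.pi fun _ : Fin n => P) ≤ 1 / Real.sqrt n := by
  classical
  set π : Measure (Fin n → X) := Measure.pi fun _ : Fin n => P with hπ
  haveI : IsProbabilityMeasure π := by rw [hπ]; infer_instance
  set p : ℝ := (P s).toReal with hp
  have hp0 : 0 ≤ p := ENNReal.toReal_nonneg
  have hp1 : p ≤ 1 := by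
    rw [hp]
    exact ENNReal.toReal_le_of_le_ofReal one_pos.le (by simpa using prob_le_one)
  set W : X → ℝ := fun a => s.indicator (fun _ => (1:ℝ)) a - p with hW
  have hWmeas : Measurable W := (measurable_const.indicator hs).sub measurable_const
  have hWb : ∀ a, |W a| ≤ 1 := by
    intro a
    rw [hW]
    by_cases h : a ∈ s <;> simp [Set.indicator, h, abs_le] <;> constructor <;> linarith
  have hWint : Integrable W P := by
    refine Integrable.mono' (integrable_const 1) hWmeas.aestronglyMeasurable ?_
    exact Eventually.of_forall fun a => by simpa [Real.norm_eq_abs] using hWb a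
  have hWzero : ∫ a, W a ∂P = 0 := by
    rw [hW]
    have hind : Integrable (fun a => s.indicator (fun _ => (1:ℝ)) a) P := by
      refine Integrable.mono' (integrable_const 1)
        (measurable_const.indicator hs).aestronglyMeasurable ?_
      exact Eventually.of_forall fun a => by simpa [Real.norm_eq_abs] using indicator_abs_le s a
    rw [integral_sub hind (integrable_const p), integral_const]
    have : ∫ a, s.indicator (fun _ => (1:ℝ)) a ∂P = p := by
      simpa [measureReal_def, Pi.one_def, hp] using MeasureTheory.integral_indicator_one (μ := P) hs
    simp [this, hp]
  have hWsq : ∫ a, W a * W a ∂P ≤ 1 := by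
    have hint : Integrable (fun a => W a * W a) P := by
      refine Integrable.mono' (integrable_const 1)
        (hWmeas.mul hWmeas).aestronglyMeasurable ?_
      refine Eventually.of_forall fun a => ?_
      rw [Real.norm_eq_abs, abs_mul]
      nlinarith [hWb a, abs_nonneg (W a)]
    have hle : ∀ a, W a * W a ≤ 1 := fun a => by
      nlinarith [hWb a, abs_nonneg (W a), abs_mul_abs_self (W a)]
    calc ∫ a, W a * W a ∂P ≤ ∫ _, (1:ℝ) ∂P := integral_mono hint (integrable_const 1) hle
      _ = 1 := by simp
  -- Z
  set Z : (Fin n → X) → ℝ := fun x =>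
    (n:ℝ)⁻¹ * (∑ k, s.indicator (fun _ => (1:ℝ)) (x k)) - p with hZdef
  have hn' : (n : ℝ) ≠ 0 := Nat.cast_ne_zero.mpr (Nat.one_le_iff_ne_zero.mp hn)
  have hZeq : ∀ x, Z x = (n:ℝ)⁻¹ * ∑ k, W (x k) := by
    intro x
    rw [hZdef, hW]
    simp only [Finset.sum_sub_distrib, Finset.sum_const, Finset.card_univ, Fintype.card_fin,
      nsmul_eq_mul, mul_sub]
    field_simp
  have hZmeas : Measurable Z := by
    apply Measurable.sub _ measurable_const
    exact (Finset.measurable_sum _ fun k _ =>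
      (measurable_const.indicator hs).comp (measurable_pi_apply k)).const_mul _
  have hZb : ∀ x, |Z x| ≤ 2 := by
    intro x
    rw [hZeq]
    have habs : |∑ k, W (x k)| ≤ (n : ℝ) := by
      refine (Finset.abs_sum_le_sum_abs _ _).trans ?_
      calc ∑ k : Fin n, |W (x k)| ≤ ∑ _k : Fin n, (1:ℝ) :=
            Finset.sum_le_sum fun k _ => hWb (x k)
        _ = n := by simp
    rw [abs_mul, abs_inv, Nat.abs_cast]
    calc (n:ℝ)⁻¹ * |∑ k, W (x k)| ≤ (n:ℝ)⁻¹ * n := by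
          refine mul_le_mul_of_nonneg_left habs (by positivity)
      _ = 1 := by field_simp
      _ ≤ 2 := one_le_two
  -- second moment
  have hprodint : ∀ k l : Fin n, Integrable (fun x : Fin n → X => W (x k) * W (x l)) π := by
    intro k l
    refine Integrable.mono' (integrable_const 1) ?_ ?_
    · exact ((hWmeas.comp (measurable_pi_apply k)).mul
        (hWmeas.comp (measurable_pi_apply l))).aestronglyMeasurable
    · refine Eventually.of_forall fun x => ?_
      rw [Real.norm_eq_abs, abs_mul]
      nlinarith [hWb (x k), hWb (x l), abs_nonneg (W (x k)), abs_nonneg (W (x l))]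
  have hsecond : ∫ x, Z x ^ 2 ∂π ≤ 1 / n := by
    have hZsq : ∀ x, Z x ^ 2 = (n:ℝ)⁻¹ * (n:ℝ)⁻¹ * ∑ k, ∑ l, W (x k) * W (x l) := by
      intro x
      rw [hZeq, ← Finset.sum_mul_sum]
      ring
    simp_rw [hZsq]
    rw [integral_const_mul, integral_finset_sum _ fun k _ =>
      integrable_finset_sum _ fun l _ => hprodint k l]
    have hterm : ∀ k : Fin n, ∫ x, ∑ l, W (x k) * W (x l) ∂π ≤ 1 := by
      intro k
      rw [integral_finset_sum _ fun l _ => hprodint k l]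
      have hval : ∀ l : Fin n, ∫ x, W (x k) * W (x l) ∂π
          = if l = k then ∫ a, W a * W a ∂P else 0 := by
        intro l
        by_cases h : l = k
        · subst h
          rw [if_pos rfl]
          exact integral_eval P (fun a => W a * W a) l
        · rw [if_neg h, integral_eval_mul P W W (fun hkl => h hkl.symm), hWzero, mul_zero]
      simp_rw [hval]
      rw [Finset.sum_ite_eq' Finset.univ k fun _ => ∫ a, W a * W a ∂P]
      simpa using hWsq
    calc (n:ℝ)⁻¹ * (n:ℝ)⁻¹ * ∑ k : Fin n, ∫ x, ∑ l, W (x k) * W (x l) ∂π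
        ≤ (n:ℝ)⁻¹ * (n:ℝ)⁻¹ * ∑ _k : Fin n, (1:ℝ) := by
          refine mul_le_mul_of_nonneg_left (Finset.sum_le_sum fun k _ => hterm k) (by positivity)
      _ = 1 / n := by field_simp; simp
  -- Cauchy-Schwarz via variance
  have hmem : MemLp (fun x => |Z x|) 2 π := by
    refine MemLp.of_bound hZmeas.abs.aestronglyMeasurable 2 ?_
    exact Eventually.of_forall fun x => by simpa [Real.norm_eq_abs, abs_abs] using hZb x
  have hvar := ProbabilityTheory.variance_nonneg (fun x => |Z x|) π
  rw [ProbabilityTheory.variance_eq_sub hmem] at hvar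
  simp only [Pi.pow_apply, sq_abs] at hvar
  have hsq : (∫ x, |Z x| ∂π) ^ 2 ≤ ∫ x, Z x ^ 2 ∂π := by linarith
  have hZnn : 0 ≤ ∫ x, |Z x| ∂π := integral_nonneg fun x => abs_nonneg _
  calc ∫ x, |Z x| ∂π = Real.sqrt ((∫ x, |Z x| ∂π) ^ 2) := (Real.sqrt_sq hZnn).symm
    _ ≤ Real.sqrt (1 / n) := Real.sqrt_le_sqrt (hsq.trans hsecond)
    _ = 1 / Real.sqrt n := by rw [one_div, Real.sqrt_inv, one_div]

end Aux

/-- Expected bounded Lipschitz distance between the empirical measure and the truth: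
for every `ε, η > 0` there is `N_η` with
`E_P[d_BL(P_n^X, P)] ≤ N_η/√n + 2η + 2ε` for all `n ≥ 1`. -/
theorem stmt_11 {X : Type*} [MetricSpace X] [TopologicalSpace.SeparableSpace X]
    [MeasurableSpace X] [BorelSpace X]
    (P : Measure X) [IsProbabilityMeasure P]
    (ε η : ℝ) (hε : 0 < ε) (hη : 0 < η) :
    ∃ N : ℕ, ∀ n : ℕ, 1 ≤ n →
      (∫ x, BLdist (empMeasure n x) P ∂(Measure.pi fun _ : Fin n => P)) ≤
        (N : ℝ) / Real.sqrt n + 2 * η + 2 * ε := by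
  classical
  haveI hne : Nonempty X := by
    by_contra h
    rw [not_nonempty_iff] at h
    have h1 : P Set.univ = 1 := measure_univ
    rw [Set.univ_eq_empty_iff.mpr h] at h1
    simp at h1
  set u : ℕ → X := TopologicalSpace.denseSeq X with hu_def
  have hu : DenseRange u := TopologicalSpace.denseRange_denseSeq X
  set B : ℕ → Set X := fun i => Metric.ball (u i) (η / 2) with hB
  set A : ℕ → Set X := disjointed B with hA
  have hAmeas : ∀ i, MeasurableSet (A i) :=
    MeasurableSet.disjointed (fun i => measurableSet_ball)
  have hAdisj : Pairwise (Function.onFun Disjoint A) := disjoint_disjointed B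
  have hAsub : ∀ i, A i ⊆ Metric.ball (u i) (η / 2) := fun i => disjointed_le B i
  have hcover : (⋃ i, A i) = Set.univ := by
    rw [hA, iUnion_disjointed]
    ext x
    simp only [Set.mem_iUnion, Set.mem_univ, iff_true, hB, Metric.mem_ball]
    exact hu.exists_dist_lt x (half_pos hη)
  set T : ℕ → Set X := fun m => ⋃ i ∈ Finset.range m, A i with hT
  have hTmeas : ∀ m, MeasurableSet (T m) := fun m =>
    Finset.measurableSet_biUnion _ fun i _ => hAmeas i
  have hTmono : Monotone T := by
    intro m m' hmm' x hx
    simp only [hT, Set.mem_iUnion, Finset.mem_range] at hx ⊢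
    obtain ⟨i, hi, hxi⟩ := hx
    exact ⟨i, lt_of_lt_of_le hi hmm', hxi⟩
  have hTunion : (⋃ m, T m) = Set.univ := by
    rw [← hcover]
    ext x
    simp only [hT, Set.mem_iUnion, Finset.mem_range]
    exact ⟨fun ⟨m, i, _, hx⟩ => ⟨i, hx⟩, fun ⟨i, hx⟩ => ⟨i + 1, i, Nat.lt_succ_self i, hx⟩⟩
  have htend : Tendsto (fun m => P (T m)) atTop (𝓝 (P (⋃ m, T m))) :=
    tendsto_measure_iUnion_atTop hTmono
  rw [hTunion, measure_univ] at htend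
  have htendR : Tendsto (fun m => (P (T m)).toReal) atTop (𝓝 1) := by
    have := (ENNReal.tendsto_toReal ENNReal.one_ne_top).comp htend
    rw [ENNReal.toReal_one] at this; exact this
  obtain ⟨m, hm⟩ : ∃ m, 1 - ε < (P (T m)).toReal := by
    have := htendR.eventually (eventually_gt_nhds (show (1:ℝ) - ε < 1 by linarith))
    exact this.exists
  have hPS : (P ((T m)ᶜ)).toReal ≤ ε := by
    have hco : P ((T m)ᶜ) = 1 - P (T m) :=
      prob_compl_eq_one_sub (hTmeas m)
    rw [hco, ENNReal.toReal_sub_of_le prob_le_one ENNReal.one_ne_top, ENNReal.toReal_one]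
    linarith
  refine ⟨m, fun n hn => ?_⟩
  set π : Measure (Fin n → X) := Measure.pi fun _ : Fin n => P with hπ
  haveI : IsProbabilityMeasure π := by rw [hπ]; infer_instance
  set S : Set X := ⋃ i ∈ Finset.range m, A i with hS
  have hSeq : S = T m := rfl
  have hSmeas : MeasurableSet S := hTmeas m
  have hn' : (n : ℝ) ≠ 0 := Nat.cast_ne_zero.mpr (Nat.one_le_iff_ne_zero.mp hn)
  -- the dominating function
  set G : (Fin n → X) → ℝ := fun x =>
    (η + (P Sᶜ).toReal)
    + ((n:ℝ)⁻¹ * ∑ k, Sᶜ.indicator (fun _ => (1:ℝ)) (x k))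
    + ∑ i ∈ Finset.range m, |(n:ℝ)⁻¹ * (∑ k, (A i).indicator (fun _ => (1:ℝ)) (x k))
        - (P (A i)).toReal| with hG
  have hBL : ∀ x : Fin n → X,
      BLdist (empMeasure n x) P ≤ G x ∧ 0 ≤ BLdist (empMeasure n x) P := by
    intro x
    haveI := empMeasure_isProb hn x
    obtain ⟨h1, h2⟩ := BLdist_bound (empMeasure n x) P u hη m A hAmeas hAdisj hAsub
    refine ⟨?_, h2⟩
    refine h1.trans ?_
    rw [hG]
    have e1 : (empMeasure n x Sᶜ).toReal
        = (n:ℝ)⁻¹ * ∑ k, Sᶜ.indicator (fun _ => (1:ℝ)) (x k) :=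
      empMeasure_apply x hSmeas.compl
    have e2 : ∀ i, (empMeasure n x (A i)).toReal
        = (n:ℝ)⁻¹ * ∑ k, (A i).indicator (fun _ => (1:ℝ)) (x k) := fun i =>
      empMeasure_apply x (hAmeas i)
    simp only [← hS] at *
    rw [e1]
    have : ∑ i ∈ Finset.range m, |(empMeasure n x (A i)).toReal - (P (A i)).toReal|
        = ∑ i ∈ Finset.range m, |(n:ℝ)⁻¹ * (∑ k, (A i).indicator (fun _ => (1:ℝ)) (x k))
            - (P (A i)).toReal| := by
      refine Finset.sum_congr rfl fun i _ => ?_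
      rw [e2 i]
    rw [this]
    ring_nf
    exact le_refl _
  have hint1 : Integrable (fun x : Fin n → X =>
      (n:ℝ)⁻¹ * ∑ k, Sᶜ.indicator (fun _ => (1:ℝ)) (x k)) π :=
    freq_integrable P hSmeas.compl
  have hdev : ∀ i, Integrable (fun x : Fin n → X =>
      |(n:ℝ)⁻¹ * (∑ k, (A i).indicator (fun _ => (1:ℝ)) (x k)) - (P (A i)).toReal|) π :=
    fun i => by
      have : Integrable ((fun x : Fin n → X =>
          (n:ℝ)⁻¹ * (∑ k, (A i).indicator (fun _ => (1:ℝ)) (x k)))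
          - fun _ => (P (A i)).toReal) π :=
        (freq_integrable P (hAmeas i)).sub (integrable_const _)
      simpa [Function.comp] using this.abs
  have hintH : Integrable (fun x : Fin n → X =>
      ∑ i ∈ Finset.range m, |(n:ℝ)⁻¹ * (∑ k, (A i).indicator (fun _ => (1:ℝ)) (x k))
        - (P (A i)).toReal|) π :=
    integrable_finset_sum _ fun i _ => hdev i
  have hGint : Integrable G π := by
    have : Integrable (fun x : Fin n → X => ((η + (P Sᶜ).toReal)
        + ((n:ℝ)⁻¹ * ∑ k, Sᶜ.indicator (fun _ => (1:ℝ)) (x k)))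
        + ∑ i ∈ Finset.range m, |(n:ℝ)⁻¹ * (∑ k, (A i).indicator (fun _ => (1:ℝ)) (x k))
            - (P (A i)).toReal|) π := ((integrable_const _).add hint1).add hintH
    exact this
  have hmono := integral_mono_of_nonneg
    (Eventually.of_forall fun x => (hBL x).2) hGint
    (Eventually.of_forall fun x => (hBL x).1)
  refine hmono.trans ?_
  have hGval : ∫ x, G x ∂π ≤ (η + (P Sᶜ).toReal) + (P Sᶜ).toReal
      + (m : ℝ) * (1 / Real.sqrt n) := by
    have hf' : Integrable (fun x : Fin n → X => (η + (P Sᶜ).toReal)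
        + ((n:ℝ)⁻¹ * ∑ k, Sᶜ.indicator (fun _ => (1:ℝ)) (x k))) π :=
      (integrable_const _).add hint1
    rw [hG]
    rw [integral_add (f := fun x : Fin n → X => (η + (P Sᶜ).toReal)
        + ((n:ℝ)⁻¹ * ∑ k, Sᶜ.indicator (fun _ => (1:ℝ)) (x k)))
      (g := fun x : Fin n → X => ∑ i ∈ Finset.range m,
        |(n:ℝ)⁻¹ * (∑ k, (A i).indicator (fun _ => (1:ℝ)) (x k)) - (P (A i)).toReal|)
      hf' hintH,
      integral_add (f := fun _ : Fin n → X => (η + (P Sᶜ).toReal))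
      (g := fun x : Fin n → X => (n:ℝ)⁻¹ * ∑ k, Sᶜ.indicator (fun _ => (1:ℝ)) (x k))
      (integrable_const _) hint1, integral_const]
    have i1 : ∫ x, (n:ℝ)⁻¹ * ∑ k, Sᶜ.indicator (fun _ => (1:ℝ)) (x k) ∂π
        = (P Sᶜ).toReal := freq_integral P hn hSmeas.compl
    have i2 : ∫ x, (∑ i ∈ Finset.range m,
        |(n:ℝ)⁻¹ * (∑ k, (A i).indicator (fun _ => (1:ℝ)) (x k)) - (P (A i)).toReal|) ∂π
        ≤ (m : ℝ) * (1 / Real.sqrt n) := by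
      rw [integral_finset_sum _ fun i _ => hdev i]
      calc ∑ i ∈ Finset.range m, ∫ x,
            |(n:ℝ)⁻¹ * (∑ k, (A i).indicator (fun _ => (1:ℝ)) (x k)) - (P (A i)).toReal| ∂π
          ≤ ∑ _i ∈ Finset.range m, 1 / Real.sqrt n :=
            Finset.sum_le_sum fun i _ => freq_dev_le P hn (hAmeas i)
        _ = (m : ℝ) * (1 / Real.sqrt n) := by
            rw [Finset.sum_const, Finset.card_range, nsmul_eq_mul]
    rw [i1]
    simp only [probReal_univ, smul_eq_mul, one_mul]
    linarith
  refine hGval.trans ?_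
  have hPS' : (P Sᶜ).toReal ≤ ε := by rw [hSeq]; exact hPS
  have hsqrt : (0:ℝ) < Real.sqrt n := Real.sqrt_pos.mpr (by exact_mod_cast hn)
  have : (m : ℝ) * (1 / Real.sqrt n) = (m : ℝ) / Real.sqrt n := by ring
  rw [this]
  linarith
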